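/- arXiv:1705.01382 — 2 statements merged into one kernel-verified Lean document; each statement's English description precedes it below -/
import Mathlib

section
/- Let G and A be additive abelian groups, let f : G → A satisfy the cube relation, let ℓ be an odd prime and n ≥ 1 a natural number. If x ∈ G satisfies ℓⁿ • f(x) = 0 and ℓⁿ • f(−x) = 0, then f(ℓⁿ • x) = 0. (This is the abstract core of Corollary 5.3 for ℓ ≠ 2: for a 1-motive M satisfying the generalized Theorem of the Cube for ℓ, the ℓⁿ-torsion of H²_ét(M, G_m) is contained in the kernel of the pullback (ℓⁿ_M)* along the multiplication-by-ℓⁿ map of the Picard stack M.) -/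
/-- If `f : G → A` satisfies the cube relation, `ℓ` is an odd prime, `n ≥ 1`,
and `ℓⁿ • f x = 0` and `ℓⁿ • f (-x) = 0`, then `f (ℓⁿ • x) = 0`. -/
theorem cube_relation_odd_prime_torsion {G A : Type*} [AddCommGroup G] [AddCommGroup A]
    (f : G → A)
    (hf : ∀ x y z : G,
      f (x + y + z) - f (x + y) - f (x + z) - f (y + z) + f x + f y + f z = 0)
    (ℓ n : ℕ) (hℓ : ℓ.Prime) (hℓ2 : ℓ ≠ 2) (hn : 1 ≤ n) (x : G)
    (hx : ℓ ^ n • f x = 0) (hx' : ℓ ^ n • f (-x) = 0) :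
    f (ℓ ^ n • x) = 0 := by
  have h0 : f 0 = 0 := by
    have h := hf 0 0 0
    simp only [add_zero] at h
    abel_nf at h
    simpa using h
  have h2 : f (2 • x) = f x + f x + f x + f (-x) := by
    have h := hf x x (-x)
    simp only [add_neg_cancel_right, add_neg_cancel, h0, sub_zero] at h
    rw [two_smul]
    have : f (x + x) - (f x + f x + f x + f (-x)) = 0 := by
      rw [← neg_zero, ← h]; abel
    exact sub_eq_zero.mp this
  have cs : ∀ j : ℕ, (j + 1).choose 2 = j + j.choose 2 := fun j => by
    rw [Nat.choose_succ_succ, Nat.choose_one_right]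
  have key : ∀ m : ℕ, f (m • x) = (m + 1).choose 2 • f x + m.choose 2 • f (-x) := by
    intro m
    induction m using Nat.strong_induction_on with
    | _ m ih =>
      match m with
      | 0 => simp [h0]
      | 1 => simp
      | (k + 2) =>
        have h := hf x x (k • x)
        have e1 : x + x + k • x = (k + 2) • x := by
          rw [add_smul, two_smul]; abel
        have e2 : x + k • x = (k + 1) • x := by
          rw [add_smul, one_smul]; abel
        have e3 : x + x = 2 • x := (two_smul ℕ x).symm
        rw [e1, e2, e3] at h
        have hrec : f ((k + 2) • x)
            = f (2 • x) + f ((k + 1) • x) + f ((k + 1) • x) - f x - f x - f (k • x) := by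
          have : f ((k + 2) • x)
              - (f (2 • x) + f ((k + 1) • x) + f ((k + 1) • x) - f x - f x - f (k • x)) = 0 := by
            rw [← h]; abel
          exact sub_eq_zero.mp this
        rw [hrec, h2, ih (k + 1) (by omega), ih k (by omega)]
        have r1 : k + 1 + 1 = k + 2 := rfl
        have r2 : k + 2 + 1 = (k + 2) + 1 := rfl
        simp only [show k + 2 + 1 = (k + 2) + 1 from rfl, show k + 1 + 1 = (k + 1) + 1 from rfl,
          cs, add_smul]
        abel
  obtain ⟨k, hk⟩ : Odd (ℓ ^ n) := (hℓ.odd_of_ne_two hℓ2).pow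
  have c1 : (ℓ ^ n + 1).choose 2 = (k + 1) * ℓ ^ n := by
    rw [hk, Nat.choose_two_right, Nat.add_sub_cancel]
    rw [show (2 * k + 1 + 1) * (2 * k + 1) = ((k + 1) * (2 * k + 1)) * 2 by ring]
    rw [Nat.mul_div_cancel _ (by norm_num)]
  have c2 : (ℓ ^ n).choose 2 = k * ℓ ^ n := by
    rw [hk, Nat.choose_two_right, Nat.add_sub_cancel]
    rw [show (2 * k + 1) * (2 * k) = (k * (2 * k + 1)) * 2 by ring]
    rw [Nat.mul_div_cancel _ (by norm_num)]
  rw [key (ℓ ^ n), c1, c2, mul_smul, mul_smul, hx, hx', smul_zero, smul_zero, add_zero]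
end

section
/- Let G and A be additive abelian groups, let f : G → A satisfy the cube relation, and let n ≥ 1 be a natural number. If x ∈ G satisfies 2ⁿ • f(x) = 0 and 2ⁿ • f(−x) = 0, then f(2^{n+1} • x) = 0. (This is the abstract core of Corollary 5.3 for ℓ = 2: for a 1-motive M satisfying the generalized Theorem of the Cube for the prime 2, the 2ⁿ-torsion of H²_ét(M, G_m) is contained in the kernel of the pullback (2^{n+1}_M)* along the multiplication-by-2^{n+1} map of the Picard stack M.) -/
/-- Triangular numbers: `cubeT m = m * (m + 1) / 2`. -/
def cubeT : ℕ → ℕ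
  | 0 => 0
  | (m + 1) => cubeT m + (m + 1)

lemma cubeT_two_mul (m : ℕ) : 2 * cubeT m = m * (m + 1) := by
  induction m with
  | zero => simp [cubeT]
  | succ k ih => simp only [cubeT]; ring_nf; ring_nf at ih; omega

/-- If `f : G → A` satisfies the cube relation, `n ≥ 1`, and
`2ⁿ • f x = 0` and `2ⁿ • f (-x) = 0`, then `f (2^(n+1) • x) = 0`. -/
theorem cube_relation_two_torsion {G A : Type*} [AddCommGroup G] [AddCommGroup A]
    (f : G → A)
    (hf : ∀ x y z : G,
      f (x + y + z) - f (x + y) - f (x + z) - f (y + z) + f x + f y + f z = 0)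
    (n : ℕ) (hn : 1 ≤ n) (x : G)
    (hx : 2 ^ n • f x = 0) (hx' : 2 ^ n • f (-x) = 0) :
    f (2 ^ (n + 1) • x) = 0 := by
  have h0 : f 0 = 0 := by have := hf 0 0 0; simpa using this
  have h2 : f (x + x) = f x + f x + f x + f (-x) := by
    have h := hf x x (-x)
    simp only [add_neg_cancel, add_neg_cancel_right, add_zero, sub_zero, h0] at h
    rw [eq_comm, ← sub_eq_zero, ← h]; abel
  -- recursion
  have hrec : ∀ m : ℕ, f ((m + 2) • x) =
      f ((m + 1) • x) + f ((m + 1) • x) - f (m • x) + f x + f (-x) := by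
    intro m
    have h := hf (m • x) x x
    have e1 : m • x + x + x = (m + 2) • x := by
      rw [add_smul, two_nsmul]; abel
    have e2 : m • x + x = (m + 1) • x := by rw [add_smul, one_smul]
    rw [e1, e2, h2] at h
    rw [← sub_eq_zero, ← h]; abel
  -- explicit formula
  have main : ∀ m : ℕ, f ((m + 1) • x) = cubeT (m + 1) • f x + cubeT m • f (-x) := by
    intro m
    induction m using Nat.strong_induction_on with
    | _ m ih =>
      match m with
      | 0 => simp [cubeT, one_smul]
      | 1 =>
        have : (2 : ℕ) • x = x + x := two_nsmul x
        rw [this, h2]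
        simp [cubeT]
        abel
      | (k + 2) =>
        have hA := ih k (by omega)
        have hB := ih (k + 1) (by omega)
        have h := hrec (k + 1)
        rw [show k + 1 + 2 = k + 2 + 1 by ring, hA, hB] at h
        rw [h]
        simp only [cubeT, add_smul]
        abel
  -- conclude
  obtain ⟨k, hk⟩ : ∃ k, 2 ^ (n + 1) = k + 1 := ⟨2 ^ (n + 1) - 1, by have := Nat.one_le_two_pow (n := n + 1); omega⟩
  have hT1 : cubeT (2 ^ (n + 1)) = 2 ^ n * (2 ^ (n + 1) + 1) := by
    have h := cubeT_two_mul (2 ^ (n + 1))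
    have : 2 * (2 ^ n * (2 ^ (n + 1) + 1)) = 2 ^ (n + 1) * (2 ^ (n + 1) + 1) := by ring
    omega
  have hT2 : cubeT k = 2 ^ n * k := by
    have h := cubeT_two_mul k
    have hk2 : k + 1 = 2 ^ (n+1) := hk.symm
    have : k * (k + 1) = 2 * (2 ^ n * k) := by
      rw [hk2]; ring
    omega
  have := main k
  rw [← hk] at this
  rw [this, hT1, hT2, mul_comm (2^n), mul_smul, mul_comm (2^n), mul_smul, hx, hx']
  simp
end
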